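/- arXiv:0809.3846 — 4 statements merged into one kernel-verified Lean document; each statement's English description precedes it below -/
import Mathlib

section
/- Let g : ℝ³ → ℝ be defined near the origin by g(h₁,h₂,h₃) = arccos( ((1+h₁)² + (1+h₂)² − (1+h₃)²) / (2(1+h₁)(1+h₂)) ) (the angle opposite the side of length 1+h₃ in a triangle with sides 1+h₁, 1+h₂, 1+h₃). Then g is differentiable at 0, g(0) = π/3, and its derivative at 0 is the linear map h ↦ (√3/3)(2h₃ − h₁ − h₂). Consequently, the total angle function Φ(κ) = Σ_{i=1}^{6} g(κ_{a_i}, κ_{a_{i+1}}, κ_{b_i}) (indices taken mod 6, with a₇ = a₁), defined for κ = (κ_{a_1},…,κ_{a_6}, κ_{b_1},…,κ_{b_6}) ∈ ℝ¹² near 0, satisfies Φ(0) = 2π and has derivative at 0 equal to κ ↦ (2√3/3)(Σ_{i=1}^{6} κ_{b_i} − Σ_{i=1}^{6} κ_{a_i}); in particular, the first-order variation of the angle sum vanishes exactly when Σ_{i=1}^{6} κ_{a_i} = Σ_{i=1}^{6} κ_{b_i} (the linearized compatibility condition). -/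
open scoped BigOperators

/-- The angle (law of cosines) opposite the side of length `1 + h₃` in a triangle with side
lengths `1 + h₁`, `1 + h₂`, `1 + h₃`, as a function of `h = (h₁, h₂, h₃) ∈ ℝ³`. -/
noncomputable def angleFun (h : ℝ × ℝ × ℝ) : ℝ :=
  Real.arccos
    (((1 + h.1) ^ 2 + (1 + h.2.1) ^ 2 - (1 + h.2.2) ^ 2) / (2 * (1 + h.1) * (1 + h.2.1)))

/-- The total angle at a node: `κ = (κ_a, κ_b) ∈ ℝ⁶ × ℝ⁶` lists the elongations of the six
spokes `a₁,…,a₆` and the six rim rods `b₁,…,b₆`; the `i`-th triangle has sides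
`1 + κ_a i`, `1 + κ_a (i+1)` and `1 + κ_b i` (indices mod 6, so `a₇ = a₁`). -/
noncomputable def totalAngle (κ : (Fin 6 → ℝ) × (Fin 6 → ℝ)) : ℝ :=
  ∑ i : Fin 6, angleFun (κ.1 i, κ.1 (i + 1), κ.2 i)

lemma angle_aux : ∃ D : (ℝ×ℝ×ℝ) →L[ℝ] ℝ, HasFDerivAt angleFun D 0 ∧
    ∀ h : ℝ×ℝ×ℝ, D h = Real.sqrt 3 / 3 * (2 * h.2.2 - h.1 - h.2.1) := by
  have hp1 : HasFDerivAt (fun h : ℝ×ℝ×ℝ => h.1) (ContinuousLinearMap.fst ℝ ℝ (ℝ×ℝ)) 0 :=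
    hasFDerivAt_fst
  have hp2 : HasFDerivAt (fun h : ℝ×ℝ×ℝ => h.2.1)
      ((ContinuousLinearMap.fst ℝ ℝ ℝ).comp (ContinuousLinearMap.snd ℝ ℝ (ℝ×ℝ))) 0 :=
    hasFDerivAt_fst.comp 0 hasFDerivAt_snd
  have hp3 : HasFDerivAt (fun h : ℝ×ℝ×ℝ => h.2.2)
      ((ContinuousLinearMap.snd ℝ ℝ ℝ).comp (ContinuousLinearMap.snd ℝ ℝ (ℝ×ℝ))) 0 :=
    hasFDerivAt_snd.comp 0 hasFDerivAt_snd
  have h1 := hp1.const_add 1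
  have h2 := hp2.const_add 1
  have h3 := hp3.const_add 1
  have hnum := ((h1.mul h1).add (h2.mul h2)).sub (h3.mul h3)
  have hden := (h1.const_mul 2).mul h2
  have hden0 : ((2:ℝ) * (1 + (0:ℝ×ℝ×ℝ).1)) * (1 + (0:ℝ×ℝ×ℝ).2.1) ≠ 0 := by norm_num
  have hdeninv := (hasDerivAt_inv hden0).comp_hasFDerivAt (0:ℝ×ℝ×ℝ) hden
  have hfrac := hnum.mul hdeninv
  have hval : ((1 + (0:ℝ×ℝ×ℝ).1) * (1 + (0:ℝ×ℝ×ℝ).1) + (1 + (0:ℝ×ℝ×ℝ).2.1) * (1 + (0:ℝ×ℝ×ℝ).2.1)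
      - (1 + (0:ℝ×ℝ×ℝ).2.2) * (1 + (0:ℝ×ℝ×ℝ).2.2)) *
      (Inv.inv ∘ fun h : ℝ×ℝ×ℝ => (2 * (1 + h.1)) * (1 + h.2.1)) 0 = 1/2 := by
    simp
  have harc : HasDerivAt Real.arccos (-(1 / Real.sqrt (1 - (1/2:ℝ)^2))) (1/2) :=
    Real.hasDerivAt_arccos (by norm_num) (by norm_num)
  rw [← hval] at harc
  have hcomp := harc.comp_hasFDerivAt (0:ℝ×ℝ×ℝ) hfrac
  refine ⟨_, hcomp.congr_of_eventuallyEq (Filter.Eventually.of_forall fun h => ?_), fun h => ?_⟩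
  · unfold angleFun
    simp only [Function.comp, Pi.mul_apply, Pi.add_apply, Pi.sub_apply, Pi.pow_apply]
    congr 1
    rw [div_eq_mul_inv]
    ring
  · simp only [ContinuousLinearMap.smul_apply, ContinuousLinearMap.sub_apply,
      ContinuousLinearMap.add_apply, ContinuousLinearMap.comp_apply,
      ContinuousLinearMap.coe_fst', ContinuousLinearMap.coe_snd',
      ContinuousLinearMap.coe_smul', Pi.smul_apply, Function.comp, smul_eq_mul]
    norm_num
    have h4 : Real.sqrt 4 = 2 := by
      rw [show (4:ℝ) = 2^2 by norm_num]; exact Real.sqrt_sq (by norm_num)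
    have hs : Real.sqrt 3 * Real.sqrt 3 = 3 := Real.mul_self_sqrt (by norm_num)
    have hpos : (0:ℝ) < Real.sqrt 3 := Real.sqrt_pos.mpr (by norm_num)
    try rw [h4]
    field_simp
    ring_nf
    rw [Real.sq_sqrt (by norm_num : (0:ℝ) ≤ 3)]
    ring



lemma angle_zero : angleFun 0 = Real.pi / 3 := by
  have : (((1 + (0:ℝ×ℝ×ℝ).1) ^ 2 + (1 + (0:ℝ×ℝ×ℝ).2.1) ^ 2 - (1 + (0:ℝ×ℝ×ℝ).2.2) ^ 2) /
      (2 * (1 + (0:ℝ×ℝ×ℝ).1) * (1 + (0:ℝ×ℝ×ℝ).2.1))) = 1/2 := by norm_num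
  unfold angleFun
  rw [this, ← Real.cos_pi_div_three, Real.arccos_cos (by positivity)
    (by linarith [Real.pi_pos])]

noncomputable def φmap (i : Fin 6) : ((Fin 6 → ℝ) × (Fin 6 → ℝ)) →L[ℝ] ℝ × ℝ × ℝ :=
  ((ContinuousLinearMap.proj i).comp (ContinuousLinearMap.fst ℝ (Fin 6 → ℝ) (Fin 6 → ℝ))).prod
    ((((ContinuousLinearMap.proj (i+1)).comp
        (ContinuousLinearMap.fst ℝ (Fin 6 → ℝ) (Fin 6 → ℝ)))).prod
      ((ContinuousLinearMap.proj i).comp (ContinuousLinearMap.snd ℝ (Fin 6 → ℝ) (Fin 6 → ℝ))))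

lemma total_aux : ∃ D : ((Fin 6 → ℝ) × (Fin 6 → ℝ)) →L[ℝ] ℝ, HasFDerivAt totalAngle D 0 ∧
    ∀ κ : (Fin 6 → ℝ) × (Fin 6 → ℝ),
      D κ = 2 * Real.sqrt 3 / 3 * ((∑ i : Fin 6, κ.2 i) - ∑ i : Fin 6, κ.1 i) := by
  obtain ⟨D, hD, hDval⟩ := angle_aux
  have hφ : ∀ i : Fin 6,
      HasFDerivAt (fun κ : (Fin 6 → ℝ) × (Fin 6 → ℝ) => angleFun (κ.1 i, κ.1 (i + 1), κ.2 i))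
        (D.comp (φmap i)) 0 := fun i => by
    have hD' : HasFDerivAt angleFun D ((φmap i) 0) := by rw [map_zero]; exact hD
    exact hD'.comp 0 (φmap i).hasFDerivAt
  refine ⟨∑ i : Fin 6, D.comp (φmap i), HasFDerivAt.fun_sum fun i _ => hφ i, fun κ => ?_⟩
  have happ : ∀ i : Fin 6, (D.comp (φmap i)) κ
      = Real.sqrt 3 / 3 * (2 * κ.2 i - κ.1 i - κ.1 (i+1)) := fun i => by
    rw [ContinuousLinearMap.comp_apply]
    rw [show (φmap i) κ = (κ.1 i, κ.1 (i+1), κ.2 i) from rfl]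
    exact hDval _
  rw [ContinuousLinearMap.sum_apply]
  simp only [happ]
  have hshift : ∑ i : Fin 6, κ.1 (i+1) = ∑ i : Fin 6, κ.1 i :=
    Equiv.sum_comp (Equiv.addRight (1 : Fin 6)) κ.1
  calc ∑ i : Fin 6, Real.sqrt 3 / 3 * (2 * κ.2 i - κ.1 i - κ.1 (i+1))
      = ∑ i : Fin 6, (Real.sqrt 3 / 3 * (2 * κ.2 i) - Real.sqrt 3 / 3 * κ.1 i
          - Real.sqrt 3 / 3 * κ.1 (i+1)) := by
        exact Finset.sum_congr rfl fun i _ => by ring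
    _ = Real.sqrt 3 / 3 * (2 * ∑ i : Fin 6, κ.2 i) - Real.sqrt 3 / 3 * (∑ i : Fin 6, κ.1 i)
          - Real.sqrt 3 / 3 * (∑ i : Fin 6, κ.1 (i+1)) := by
        rw [Finset.sum_sub_distrib, Finset.sum_sub_distrib, ← Finset.mul_sum, ← Finset.mul_sum,
          ← Finset.mul_sum, ← Finset.mul_sum]
    _ = 2 * Real.sqrt 3 / 3 * ((∑ i : Fin 6, κ.2 i) - ∑ i : Fin 6, κ.1 i) := by
        rw [hshift]; ring

/-- `angleFun` is differentiable at `0` with value `π/3` and derivative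
`h ↦ (√3/3)(2h₃ - h₁ - h₂)`; consequently the total angle `totalAngle` equals `2π` at `0`,
is differentiable at `0` with derivative `κ ↦ (2√3/3)(Σ κ_b - Σ κ_a)`, whose vanishing is
exactly the linearized compatibility condition `Σ κ_a = Σ κ_b`. -/
theorem linearized_compatibility :
    DifferentiableAt ℝ angleFun 0 ∧
    angleFun 0 = Real.pi / 3 ∧
    (∀ h : ℝ × ℝ × ℝ,
      fderiv ℝ angleFun 0 h = Real.sqrt 3 / 3 * (2 * h.2.2 - h.1 - h.2.1)) ∧
    totalAngle 0 = 2 * Real.pi ∧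
    DifferentiableAt ℝ totalAngle 0 ∧
    (∀ κ : (Fin 6 → ℝ) × (Fin 6 → ℝ),
      fderiv ℝ totalAngle 0 κ =
        2 * Real.sqrt 3 / 3 * ((∑ i : Fin 6, κ.2 i) - ∑ i : Fin 6, κ.1 i)) ∧
    (∀ κ : (Fin 6 → ℝ) × (Fin 6 → ℝ),
      fderiv ℝ totalAngle 0 κ = 0 ↔ (∑ i : Fin 6, κ.1 i) = ∑ i : Fin 6, κ.2 i) := by
  obtain ⟨D, hD, hDval⟩ := angle_aux
  obtain ⟨D2, hD2, hD2val⟩ := total_aux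
  have hf1 : fderiv ℝ angleFun 0 = D := hD.fderiv
  have hf2 : fderiv ℝ totalAngle 0 = D2 := hD2.fderiv
  have hform : ∀ κ : (Fin 6 → ℝ) × (Fin 6 → ℝ),
      fderiv ℝ totalAngle 0 κ =
        2 * Real.sqrt 3 / 3 * ((∑ i : Fin 6, κ.2 i) - ∑ i : Fin 6, κ.1 i) := fun κ => by
    rw [hf2]; exact hD2val κ
  have hc : (0:ℝ) < 2 * Real.sqrt 3 / 3 := by positivity
  refine ⟨hD.differentiableAt, angle_zero, fun h => by rw [hf1]; exact hDval h, ?_,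
    hD2.differentiableAt, hform, fun κ => ?_⟩
  · unfold totalAngle
    have : ∀ i : Fin 6, angleFun ((0 : (Fin 6 → ℝ) × (Fin 6 → ℝ)).1 i,
        (0 : (Fin 6 → ℝ) × (Fin 6 → ℝ)).1 (i+1), (0 : (Fin 6 → ℝ) × (Fin 6 → ℝ)).2 i)
        = Real.pi / 3 := fun i => angle_zero
    rw [Finset.sum_congr rfl fun i _ => this i]
    simp
    ring
  · rw [hform κ]
    constructor
    · intro h0
      rcases mul_eq_zero.mp h0 with h | h
      · exact absurd h (ne_of_gt hc)
      · linarith [sub_eq_zero.mp h]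
    · intro h; rw [h, sub_self, mul_zero]
end

section
/- For every integer n ≥ 2, the hexagonal linear functionals of the hexagonal array of side n are linearly independent: the family of linear maps Z_p : ℝ^E → ℝ indexed by interior nodes p, where Z_p(κ) = (sum of κ over the six spoke edges of p) − (sum of κ over the six rim edges of p) and E is the edge set, is a linearly independent family of functionals. -/
open scoped Classical

/-- The hexagonal array of side `n`: nodes `(i,j) ∈ ℤ²` with `|i| ≤ n-1`, `|j| ≤ n-1`,
`|i+j| ≤ n-1`. -/
noncomputable def hexNodes (n : ℤ) : Finset (ℤ × ℤ) :=
  (Finset.Icc ((-(n-1), -(n-1)) : ℤ × ℤ) ((n-1, n-1) : ℤ × ℤ)).filter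
    (fun p => |p.1 + p.2| ≤ n - 1)

/-- The three lattice directions `(1,0)`, `(0,1)`, `(-1,1)`. -/
def hexDirs : Finset (ℤ × ℤ) := {(1,0), (0,1), (-1,1)}

/-- The edges of the hexagonal array of side `n`: unordered pairs `{p, p+d}` with both
endpoints in `hexNodes n` and `d` one of the three lattice directions. -/
noncomputable def hexEdges (n : ℤ) : Finset (Sym2 (ℤ × ℤ)) :=
  (((hexNodes n) ×ˢ hexDirs).filter (fun pd => pd.1 + pd.2 ∈ hexNodes n)).image
    (fun pd => s(pd.1, pd.1 + pd.2))

/-- Interior nodes: all six neighbors lie in the array. -/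
noncomputable def interiorNodes (n : ℤ) : Finset (ℤ × ℤ) :=
  (hexNodes n).filter (fun p => ∀ d ∈ hexDirs, p + d ∈ hexNodes n ∧ p - d ∈ hexNodes n)

/-- Evaluation of `κ : Edges(H_n) → ℝ` at the unordered pair `e` (zero if `e` is not an
edge), as a linear functional on `ℝ^E`. -/
noncomputable def edgeEval (n : ℤ) (e : Sym2 (ℤ × ℤ)) :
    ({e : Sym2 (ℤ × ℤ) // e ∈ hexEdges n} → ℝ) →ₗ[ℝ] ℝ where
  toFun κ := if h : e ∈ hexEdges n then κ ⟨e, h⟩ else 0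
  map_add' x y := by by_cases h : e ∈ hexEdges n <;> simp [h]
  map_smul' c x := by by_cases h : e ∈ hexEdges n <;> simp [h]

/-- The hexagonal linear functional at a node `p`: sum of `κ` over the six spoke edges of
`p` minus the sum of `κ` over the six rim edges around `p`. -/
noncomputable def Zfun (n : ℤ) (p : ℤ × ℤ) :
    ({e : Sym2 (ℤ × ℤ) // e ∈ hexEdges n} → ℝ) →ₗ[ℝ] ℝ :=
  (edgeEval n s(p, p + (1,0)) + edgeEval n s(p, p - (1,0)) + edgeEval n s(p, p + (0,1)) +
      edgeEval n s(p, p - (0,1)) + edgeEval n s(p, p + (-1,1)) + edgeEval n s(p, p - (-1,1))) -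
  (edgeEval n s(p + (1,0), p + (0,1)) + edgeEval n s(p + (0,1), p + (-1,1)) +
      edgeEval n s(p + (-1,1), p - (1,0)) + edgeEval n s(p - (1,0), p - (0,1)) +
      edgeEval n s(p - (0,1), p + (1,-1)) + edgeEval n s(p + (1,-1), p + (1,0)))


/-- The witness indicator function at edge `e`. -/
noncomputable def indicKappa (n : ℤ) (e : Sym2 (ℤ × ℤ)) :
    {f : Sym2 (ℤ × ℤ) // f ∈ hexEdges n} → ℝ :=
  fun g => if g.1 = e then 1 else 0

lemma edgeEval_indic_ne (n : ℤ) (f e : Sym2 (ℤ × ℤ)) (hne : f ≠ e) :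
    edgeEval n f (indicKappa n e) = 0 := by
  simp [edgeEval, indicKappa, hne]

lemma edgeEval_indic_eq (n : ℤ) (e : Sym2 (ℤ × ℤ)) (he : e ∈ hexEdges n) :
    edgeEval n e (indicKappa n e) = 1 := by
  simp [edgeEval, indicKappa, he]

lemma Zfun_indic_ne (n : ℤ) (p q : ℤ × ℤ) (hne : p ≠ q) (hlex : toLex p ≤ toLex q) :
    Zfun n q (indicKappa n s(((p.1 - 1, p.2) : ℤ × ℤ), p)) = 0 := by
  rw [Prod.Lex.le_iff] at hlex
  simp only [ofLex_toLex] at hlex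
  rw [Ne, Prod.ext_iff, not_and] at hne
  have h1 : s(q, q + (1,0)) ≠ s(((p.1 - 1, p.2) : ℤ × ℤ), p) := by
    intro hcon
    rw [Sym2.eq_iff] at hcon
    simp only [Prod.ext_iff, Prod.fst_add, Prod.snd_add, Prod.fst_sub, Prod.snd_sub,
      Prod.mk.injEq] at hcon
    omega
  have h2 : s(q, q - (1,0)) ≠ s(((p.1 - 1, p.2) : ℤ × ℤ), p) := by
    intro hcon
    rw [Sym2.eq_iff] at hcon
    simp only [Prod.ext_iff, Prod.fst_add, Prod.snd_add, Prod.fst_sub, Prod.snd_sub,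
      Prod.mk.injEq] at hcon
    omega
  have h3 : s(q, q + (0,1)) ≠ s(((p.1 - 1, p.2) : ℤ × ℤ), p) := by
    intro hcon
    rw [Sym2.eq_iff] at hcon
    simp only [Prod.ext_iff, Prod.fst_add, Prod.snd_add, Prod.fst_sub, Prod.snd_sub,
      Prod.mk.injEq] at hcon
    omega
  have h4 : s(q, q - (0,1)) ≠ s(((p.1 - 1, p.2) : ℤ × ℤ), p) := by
    intro hcon
    rw [Sym2.eq_iff] at hcon
    simp only [Prod.ext_iff, Prod.fst_add, Prod.snd_add, Prod.fst_sub, Prod.snd_sub,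
      Prod.mk.injEq] at hcon
    omega
  have h5 : s(q, q + (-1,1)) ≠ s(((p.1 - 1, p.2) : ℤ × ℤ), p) := by
    intro hcon
    rw [Sym2.eq_iff] at hcon
    simp only [Prod.ext_iff, Prod.fst_add, Prod.snd_add, Prod.fst_sub, Prod.snd_sub,
      Prod.mk.injEq] at hcon
    omega
  have h6 : s(q, q - (-1,1)) ≠ s(((p.1 - 1, p.2) : ℤ × ℤ), p) := by
    intro hcon
    rw [Sym2.eq_iff] at hcon
    simp only [Prod.ext_iff, Prod.fst_add, Prod.snd_add, Prod.fst_sub, Prod.snd_sub,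
      Prod.mk.injEq] at hcon
    omega
  have h7 : s(q + (1,0), q + (0,1)) ≠ s(((p.1 - 1, p.2) : ℤ × ℤ), p) := by
    intro hcon
    rw [Sym2.eq_iff] at hcon
    simp only [Prod.ext_iff, Prod.fst_add, Prod.snd_add, Prod.fst_sub, Prod.snd_sub,
      Prod.mk.injEq] at hcon
    omega
  have h8 : s(q + (0,1), q + (-1,1)) ≠ s(((p.1 - 1, p.2) : ℤ × ℤ), p) := by
    intro hcon
    rw [Sym2.eq_iff] at hcon
    simp only [Prod.ext_iff, Prod.fst_add, Prod.snd_add, Prod.fst_sub, Prod.snd_sub,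
      Prod.mk.injEq] at hcon
    omega
  have h9 : s(q + (-1,1), q - (1,0)) ≠ s(((p.1 - 1, p.2) : ℤ × ℤ), p) := by
    intro hcon
    rw [Sym2.eq_iff] at hcon
    simp only [Prod.ext_iff, Prod.fst_add, Prod.snd_add, Prod.fst_sub, Prod.snd_sub,
      Prod.mk.injEq] at hcon
    omega
  have h10 : s(q - (1,0), q - (0,1)) ≠ s(((p.1 - 1, p.2) : ℤ × ℤ), p) := by
    intro hcon
    rw [Sym2.eq_iff] at hcon
    simp only [Prod.ext_iff, Prod.fst_add, Prod.snd_add, Prod.fst_sub, Prod.snd_sub,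
      Prod.mk.injEq] at hcon
    omega
  have h11 : s(q - (0,1), q + (1,-1)) ≠ s(((p.1 - 1, p.2) : ℤ × ℤ), p) := by
    intro hcon
    rw [Sym2.eq_iff] at hcon
    simp only [Prod.ext_iff, Prod.fst_add, Prod.snd_add, Prod.fst_sub, Prod.snd_sub,
      Prod.mk.injEq] at hcon
    omega
  have h12 : s(q + (1,-1), q + (1,0)) ≠ s(((p.1 - 1, p.2) : ℤ × ℤ), p) := by
    intro hcon
    rw [Sym2.eq_iff] at hcon
    simp only [Prod.ext_iff, Prod.fst_add, Prod.snd_add, Prod.fst_sub, Prod.snd_sub,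
      Prod.mk.injEq] at hcon
    omega
  simp only [Zfun, LinearMap.sub_apply, LinearMap.add_apply]
  rw [edgeEval_indic_ne n _ _ h1,
    edgeEval_indic_ne n _ _ h2,
    edgeEval_indic_ne n _ _ h3,
    edgeEval_indic_ne n _ _ h4,
    edgeEval_indic_ne n _ _ h5,
    edgeEval_indic_ne n _ _ h6,
    edgeEval_indic_ne n _ _ h7,
    edgeEval_indic_ne n _ _ h8,
    edgeEval_indic_ne n _ _ h9,
    edgeEval_indic_ne n _ _ h10,
    edgeEval_indic_ne n _ _ h11,
    edgeEval_indic_ne n _ _ h12]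
  norm_num

lemma hexEdge_mem (n : ℤ) (p : ℤ × ℤ) (hp : p ∈ interiorNodes n) :
    s(((p.1 - 1, p.2) : ℤ × ℤ), p) ∈ hexEdges n := by
  rw [interiorNodes, Finset.mem_filter] at hp
  obtain ⟨hp1, hp2⟩ := hp
  have hd : ((1, 0) : ℤ × ℤ) ∈ hexDirs := by simp [hexDirs]
  obtain ⟨hadd, hsub⟩ := hp2 (1, 0) hd
  have h1 : p - ((1, 0) : ℤ × ℤ) = (p.1 - 1, p.2) := by
    rw [Prod.ext_iff]; constructor <;> simp
  have h2 : ((p.1 - 1, p.2) : ℤ × ℤ) + (1, 0) = p := by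
    rw [Prod.ext_iff]; constructor <;> simp
  rw [hexEdges, Finset.mem_image]
  refine ⟨((p.1 - 1, p.2), (1, 0)),
    Finset.mem_filter.2 ⟨Finset.mem_product.2 ⟨h1 ▸ hsub, hd⟩, ?_⟩, ?_⟩
  · show ((p.1 - 1, p.2) : ℤ × ℤ) + (1, 0) ∈ hexNodes n
    rw [h2]; exact hp1
  · show s((((p.1 - 1, p.2) : ℤ × ℤ), ((1, 0) : ℤ × ℤ)).1,
        (((p.1 - 1, p.2) : ℤ × ℤ), ((1, 0) : ℤ × ℤ)).1 +
        (((p.1 - 1, p.2) : ℤ × ℤ), ((1, 0) : ℤ × ℤ)).2) = s(((p.1 - 1, p.2) : ℤ × ℤ), p)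
    simp only []
    rw [h2]

lemma Zfun_indic_self (n : ℤ) (p : ℤ × ℤ) (hp : p ∈ interiorNodes n) :
    Zfun n p (indicKappa n s(((p.1 - 1, p.2) : ℤ × ℤ), p)) = 1 := by
  have he : s(((p.1 - 1, p.2) : ℤ × ℤ), p) ∈ hexEdges n := hexEdge_mem n p hp
  have h2 : s(p, p - (1,0)) = s(((p.1 - 1, p.2) : ℤ × ℤ), p) := by
    rw [Sym2.eq_iff]
    simp only [Prod.ext_iff, Prod.fst_sub, Prod.snd_sub, Prod.mk.injEq]
    simp
  have h1 : s(p, p + (1,0)) ≠ s(((p.1 - 1, p.2) : ℤ × ℤ), p) := by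
    intro hcon
    rw [Sym2.eq_iff] at hcon
    simp only [Prod.ext_iff, Prod.fst_add, Prod.snd_add, Prod.fst_sub, Prod.snd_sub,
      Prod.mk.injEq] at hcon
    omega
  have h3 : s(p, p + (0,1)) ≠ s(((p.1 - 1, p.2) : ℤ × ℤ), p) := by
    intro hcon
    rw [Sym2.eq_iff] at hcon
    simp only [Prod.ext_iff, Prod.fst_add, Prod.snd_add, Prod.fst_sub, Prod.snd_sub,
      Prod.mk.injEq] at hcon
    omega
  have h4 : s(p, p - (0,1)) ≠ s(((p.1 - 1, p.2) : ℤ × ℤ), p) := by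
    intro hcon
    rw [Sym2.eq_iff] at hcon
    simp only [Prod.ext_iff, Prod.fst_add, Prod.snd_add, Prod.fst_sub, Prod.snd_sub,
      Prod.mk.injEq] at hcon
    omega
  have h5 : s(p, p + (-1,1)) ≠ s(((p.1 - 1, p.2) : ℤ × ℤ), p) := by
    intro hcon
    rw [Sym2.eq_iff] at hcon
    simp only [Prod.ext_iff, Prod.fst_add, Prod.snd_add, Prod.fst_sub, Prod.snd_sub,
      Prod.mk.injEq] at hcon
    omega
  have h6 : s(p, p - (-1,1)) ≠ s(((p.1 - 1, p.2) : ℤ × ℤ), p) := by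
    intro hcon
    rw [Sym2.eq_iff] at hcon
    simp only [Prod.ext_iff, Prod.fst_add, Prod.snd_add, Prod.fst_sub, Prod.snd_sub,
      Prod.mk.injEq] at hcon
    omega
  have h7 : s(p + (1,0), p + (0,1)) ≠ s(((p.1 - 1, p.2) : ℤ × ℤ), p) := by
    intro hcon
    rw [Sym2.eq_iff] at hcon
    simp only [Prod.ext_iff, Prod.fst_add, Prod.snd_add, Prod.fst_sub, Prod.snd_sub,
      Prod.mk.injEq] at hcon
    omega
  have h8 : s(p + (0,1), p + (-1,1)) ≠ s(((p.1 - 1, p.2) : ℤ × ℤ), p) := by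
    intro hcon
    rw [Sym2.eq_iff] at hcon
    simp only [Prod.ext_iff, Prod.fst_add, Prod.snd_add, Prod.fst_sub, Prod.snd_sub,
      Prod.mk.injEq] at hcon
    omega
  have h9 : s(p + (-1,1), p - (1,0)) ≠ s(((p.1 - 1, p.2) : ℤ × ℤ), p) := by
    intro hcon
    rw [Sym2.eq_iff] at hcon
    simp only [Prod.ext_iff, Prod.fst_add, Prod.snd_add, Prod.fst_sub, Prod.snd_sub,
      Prod.mk.injEq] at hcon
    omega
  have h10 : s(p - (1,0), p - (0,1)) ≠ s(((p.1 - 1, p.2) : ℤ × ℤ), p) := by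
    intro hcon
    rw [Sym2.eq_iff] at hcon
    simp only [Prod.ext_iff, Prod.fst_add, Prod.snd_add, Prod.fst_sub, Prod.snd_sub,
      Prod.mk.injEq] at hcon
    omega
  have h11 : s(p - (0,1), p + (1,-1)) ≠ s(((p.1 - 1, p.2) : ℤ × ℤ), p) := by
    intro hcon
    rw [Sym2.eq_iff] at hcon
    simp only [Prod.ext_iff, Prod.fst_add, Prod.snd_add, Prod.fst_sub, Prod.snd_sub,
      Prod.mk.injEq] at hcon
    omega
  have h12 : s(p + (1,-1), p + (1,0)) ≠ s(((p.1 - 1, p.2) : ℤ × ℤ), p) := by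
    intro hcon
    rw [Sym2.eq_iff] at hcon
    simp only [Prod.ext_iff, Prod.fst_add, Prod.snd_add, Prod.fst_sub, Prod.snd_sub,
      Prod.mk.injEq] at hcon
    omega
  simp only [Zfun, LinearMap.sub_apply, LinearMap.add_apply]
  rw [edgeEval_indic_ne n _ _ h1,
    edgeEval_indic_ne n _ _ h3,
    edgeEval_indic_ne n _ _ h4,
    edgeEval_indic_ne n _ _ h5,
    edgeEval_indic_ne n _ _ h6,
    edgeEval_indic_ne n _ _ h7,
    edgeEval_indic_ne n _ _ h8,
    edgeEval_indic_ne n _ _ h9,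
    edgeEval_indic_ne n _ _ h10,
    edgeEval_indic_ne n _ _ h11,
    edgeEval_indic_ne n _ _ h12, h2, edgeEval_indic_eq n _ he]
  norm_num

/-- for `n ≥ 2`, the family of hexagonal linear functionals `Z_p : ℝ^E → ℝ`,
indexed by the interior nodes `p` of the hexagonal array of side `n`, is linearly
independent. -/
theorem hexagonal_functionals_linearIndependent (n : ℤ) (hn : 2 ≤ n) :
    LinearIndependent ℝ (fun p : {p : ℤ × ℤ // p ∈ interiorNodes n} => Zfun n p.1) := by
  rw [linearIndependent_iff']
  intro s g hsum i hi
  by_contra hgi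
  have hSne : (s.filter (fun j => g j ≠ 0)).Nonempty :=
    ⟨i, Finset.mem_filter.2 ⟨hi, hgi⟩⟩
  obtain ⟨q₀, hq₀S, hmin⟩ :=
    Finset.exists_min_image (s.filter (fun j => g j ≠ 0)) (fun j => toLex j.1) hSne
  obtain ⟨hq₀s, hgq₀⟩ := Finset.mem_filter.1 hq₀S
  have happ := LinearMap.congr_fun hsum (indicKappa n s(((q₀.1.1 - 1, q₀.1.2) : ℤ × ℤ), q₀.1))
  simp only [LinearMap.coe_sum, Finset.sum_apply, LinearMap.smul_apply, smul_eq_mul,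
    LinearMap.zero_apply] at happ
  rw [Finset.sum_eq_single q₀] at happ
  · rw [Zfun_indic_self n q₀.1 q₀.2] at happ
    exact hgq₀ (by linarith)
  · intro j hj hjne
    by_cases hgj : g j = 0
    · simp [hgj]
    · have hjS : j ∈ s.filter (fun j => g j ≠ 0) := Finset.mem_filter.2 ⟨hj, hgj⟩
      have hlex := hmin j hjS
      have hne : q₀.1 ≠ j.1 := fun h => hjne (Subtype.ext h.symm)
      rw [Zfun_indic_ne n q₀.1 j.1 hne hlex, mul_zero]
  · intro h
    exact absurd hq₀s h
end

section
/- For every integer n ≥ 2, the set of all κ ∈ ℝ^E satisfying the hexagonal equation at every interior node of the hexagonal array of side n is a linear subspace of ℝ^E of dimension E(n) − M(n) = (9n² − 15n + 6) − (3n² − 9n + 7) = 6n² − 6n − 1 = 2N(n) − 3, where E(n), M(n), N(n) are the numbers of edges, interior nodes, and nodes respectively. -/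
open scoped Classical

open Finset

lemma sum_abs_Icc : ∀ k : ℕ, ∑ i ∈ Icc (-(k:ℤ)) (k:ℤ), |i| = k*(k+1) := by
  intro k
  induction k with
  | zero => simp
  | succ k ih =>
    have hs : Icc (-(k+1:ℤ)) (k+1:ℤ) = insert (-(k+1:ℤ)) (insert ((k+1:ℤ)) (Icc (-(k:ℤ)) (k:ℤ))) := by
      ext x; simp; omega
    have h1 : (-(k+1:ℤ)) ∉ insert ((k+1:ℤ)) (Icc (-(k:ℤ)) (k:ℤ)) := by simp; omega
    have h2 : ((k+1:ℤ)) ∉ Icc (-(k:ℤ)) (k:ℤ) := by simp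
    push_cast [hs, Finset.sum_insert h1, Finset.sum_insert h2, ih]
    rw [abs_of_nonpos (by omega), abs_of_nonneg (by positivity)]
    ring

lemma sum_linear (m : ℤ) (hm : 0 ≤ m) (c : ℤ) :
    ∑ i ∈ Icc (-m) m, (c - |i|) = (2*m+1)*c - m*(m+1) := by
  obtain ⟨k, rfl⟩ := Int.eq_ofNat_of_zero_le hm
  rw [Finset.sum_sub_distrib, sum_abs_Icc, Finset.sum_const, Int.card_Icc]
  rw [show ((k:ℤ) + 1 - -(k:ℤ)).toNat = 2*k+1 by omega]
  push_cast
  ring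

lemma sum_ind_neg (m : ℤ) (hm : 0 ≤ m) :
    ∑ i ∈ Icc (-m) m, (if i < 0 then (1:ℤ) else 0) = m := by
  rw [Finset.sum_boole]
  rw [show (Icc (-m) m).filter (fun i => i < 0) = Icc (-m) (-1) by ext; simp; omega,
    Int.card_Icc]
  omega

lemma sum_ind_pos (m : ℤ) (hm : 0 ≤ m) :
    ∑ i ∈ Icc (-m) m, (if 1 ≤ i then (1:ℤ) else 0) = m := by
  rw [Finset.sum_boole]
  rw [show (Icc (-m) m).filter (fun i => 1 ≤ i) = Icc 1 m by ext; simp; omega,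
    Int.card_Icc]
  omega

lemma card_prod_filter (a b c d : ℤ) (P : ℤ → ℤ → Prop) [∀ i j, Decidable (P i j)] :
    (((Icc a b ×ˢ Icc c d)).filter (fun p : ℤ×ℤ => P p.1 p.2)).card
      = ∑ i ∈ Icc a b, ((Icc c d).filter (P i)).card := by
  rw [Finset.card_filter, Finset.sum_product]
  exact Finset.sum_congr rfl (fun i _ => (Finset.card_filter _ _).symm)

lemma card_hexNodes' (m : ℤ) (hm : 0 ≤ m) : ((hexNodes (m+1)).card : ℤ) = 3*m^2+3*m+1 := by
  have h1 : hexNodes (m+1)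
      = (Icc (-m) m ×ˢ Icc (-m) m).filter (fun p : ℤ×ℤ => (fun i j => -m ≤ i+j ∧ i+j ≤ m) p.1 p.2) := by
    ext ⟨i,j⟩
    simp [hexNodes, Finset.Icc_prod_def, Finset.mem_Icc, Prod.le_def, abs_le, Finset.mem_product]
    try omega
  rw [h1, card_prod_filter (-m) m (-m) m (fun i j => -m ≤ i+j ∧ i+j ≤ m)]
  push_cast
  have h2 : ∀ i ∈ Icc (-m) m,
      (((Icc (-m) m).filter (fun j => -m ≤ i+j ∧ i+j ≤ m)).card : ℤ) = (2*m+1) - |i| := by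
    intro i hi
    simp only [Finset.mem_Icc] at hi
    have he : (Icc (-m) m).filter (fun j => -m ≤ i+j ∧ i+j ≤ m) = Icc (max (-m) (-m-i)) (min m (m-i)) := by
      ext j; simp; omega
    rw [he, Int.card_Icc]
    rcases le_or_gt 0 i with h | h
    · rw [max_eq_left (by omega), min_eq_right (by omega), abs_of_nonneg h]
      omega
    · rw [max_eq_right (by omega), min_eq_left (by omega), abs_of_neg h]
      omega
  rw [Finset.sum_congr rfl h2, sum_linear m hm]
  ring

-- direction (1,0)
lemma dir_count₁ (m : ℤ) (hm : 0 ≤ m) :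
    (((hexNodes (m+1)).filter (fun p => p + (1,0) ∈ hexNodes (m+1))).card : ℤ) = 3*m^2 + m := by
  have h1 : (hexNodes (m+1)).filter (fun p => p + (1,0) ∈ hexNodes (m+1))
      = (Icc (-m) m ×ˢ Icc (-m) m).filter
          (fun p : ℤ×ℤ => (fun i j => -m ≤ i+j ∧ i+j ≤ m-1 ∧ i ≤ m-1) p.1 p.2) := by
    ext ⟨i,j⟩
    simp [hexNodes, Finset.Icc_prod_def, Finset.mem_Icc, Prod.le_def, abs_le, Finset.mem_product]
    omega
  rw [h1, card_prod_filter (-m) m (-m) m (fun i j => -m ≤ i+j ∧ i+j ≤ m-1 ∧ i ≤ m-1)]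
  push_cast
  have h2 : ∀ i ∈ Icc (-m) m,
      (((Icc (-m) m).filter (fun j => -m ≤ i+j ∧ i+j ≤ m-1 ∧ i ≤ m-1)).card : ℤ)
        = (2*m - |i|) + (if i < 0 then (1:ℤ) else 0) - (if i = m then m else 0) := by
    intro i hi
    simp only [Finset.mem_Icc] at hi
    by_cases him : i = m
    · subst him
      rw [show (Icc (-i) i).filter (fun j => -i ≤ i+j ∧ i+j ≤ i-1 ∧ i ≤ i-1) = (∅ : Finset ℤ)
          by ext; simp; try omega]
      rw [abs_of_nonneg (by omega), if_neg (by omega), if_pos rfl]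
      simp only [Finset.card_empty, Nat.cast_zero]
      omega
    · rw [show (Icc (-m) m).filter (fun j => -m ≤ i+j ∧ i+j ≤ m-1 ∧ i ≤ m-1)
          = Icc (max (-m) (-m-i)) (min m (m-1-i)) by ext; simp; omega,
        Int.card_Icc, if_neg him]
      rcases le_or_gt 0 i with h | h
      · rw [max_eq_left (by omega), min_eq_right (by omega), abs_of_nonneg h, if_neg (by omega)]
        omega
      · rw [max_eq_right (by omega), min_eq_left (by omega), abs_of_neg h, if_pos h]
        omega
  rw [Finset.sum_congr rfl h2]
  rw [Finset.sum_sub_distrib, Finset.sum_add_distrib, sum_ind_neg m hm,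
    Finset.sum_ite_eq' (Icc (-m) m) m (fun _ => m), if_pos (by simp; omega),
    sum_linear m hm (2*m)]
  ring

-- direction (0,1)
lemma dir_count₂ (m : ℤ) (hm : 0 ≤ m) :
    (((hexNodes (m+1)).filter (fun p => p + (0,1) ∈ hexNodes (m+1))).card : ℤ) = 3*m^2 + m := by
  have h1 : (hexNodes (m+1)).filter (fun p => p + (0,1) ∈ hexNodes (m+1))
      = (Icc (-m) m ×ˢ Icc (-m) m).filter
          (fun p : ℤ×ℤ => (fun i j => -m ≤ i+j ∧ i+j ≤ m-1 ∧ j ≤ m-1) p.1 p.2) := by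
    ext ⟨i,j⟩
    simp [hexNodes, Finset.Icc_prod_def, Finset.mem_Icc, Prod.le_def, abs_le, Finset.mem_product]
    omega
  rw [h1, card_prod_filter (-m) m (-m) m (fun i j => -m ≤ i+j ∧ i+j ≤ m-1 ∧ j ≤ m-1)]
  push_cast
  have h2 : ∀ i ∈ Icc (-m) m,
      (((Icc (-m) m).filter (fun j => -m ≤ i+j ∧ i+j ≤ m-1 ∧ j ≤ m-1)).card : ℤ)
        = 2*m - |i| := by
    intro i hi
    simp only [Finset.mem_Icc] at hi
    rw [show (Icc (-m) m).filter (fun j => -m ≤ i+j ∧ i+j ≤ m-1 ∧ j ≤ m-1)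
        = Icc (max (-m) (-m-i)) (min (m-1) (m-1-i)) by ext; simp; omega,
      Int.card_Icc]
    rcases le_or_gt 0 i with h | h
    · rw [max_eq_left (by omega), min_eq_right (by omega), abs_of_nonneg h]
      omega
    · rw [max_eq_right (by omega), min_eq_left (by omega), abs_of_neg h]
      omega
  rw [Finset.sum_congr rfl h2, sum_linear m hm (2*m)]
  ring

-- direction (-1,1)
lemma dir_count₃ (m : ℤ) (hm : 0 ≤ m) :
    (((hexNodes (m+1)).filter (fun p => p + (-1,1) ∈ hexNodes (m+1))).card : ℤ) = 3*m^2 + m := by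
  have h1 : (hexNodes (m+1)).filter (fun p => p + (-1,1) ∈ hexNodes (m+1))
      = (Icc (-m) m ×ˢ Icc (-m) m).filter
          (fun p : ℤ×ℤ => (fun i j => -m ≤ i+j ∧ i+j ≤ m ∧ j ≤ m-1 ∧ -m+1 ≤ i) p.1 p.2) := by
    ext ⟨i,j⟩
    simp [hexNodes, Finset.Icc_prod_def, Finset.mem_Icc, Prod.le_def, abs_le, Finset.mem_product]
    omega
  rw [h1, card_prod_filter (-m) m (-m) m (fun i j => -m ≤ i+j ∧ i+j ≤ m ∧ j ≤ m-1 ∧ -m+1 ≤ i)]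
  push_cast
  have h2 : ∀ i ∈ Icc (-m) m,
      (((Icc (-m) m).filter (fun j => -m ≤ i+j ∧ i+j ≤ m ∧ j ≤ m-1 ∧ -m+1 ≤ i)).card : ℤ)
        = (2*m - |i|) + (if 1 ≤ i then (1:ℤ) else 0) - (if i = -m then m else 0) := by
    intro i hi
    simp only [Finset.mem_Icc] at hi
    by_cases him : i = -m
    · subst him
      rw [show (Icc (-m) m).filter (fun j => -m ≤ -m+j ∧ -m+j ≤ m ∧ j ≤ m-1 ∧ -m+1 ≤ -m)
            = (∅ : Finset ℤ) by ext; simp; try omega]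
      rw [abs_of_nonpos (by omega), if_neg (by omega), if_pos rfl]
      simp only [Finset.card_empty, Nat.cast_zero]
      omega
    · rw [show (Icc (-m) m).filter (fun j => -m ≤ i+j ∧ i+j ≤ m ∧ j ≤ m-1 ∧ -m+1 ≤ i)
          = Icc (max (-m) (-m-i)) (min (m-1) (m-i)) by ext; simp; omega,
        Int.card_Icc, if_neg him]
      rcases le_or_gt 1 i with h | h
      · rw [max_eq_left (by omega), min_eq_right (by omega), abs_of_nonneg (by omega), if_pos h]
        omega
      · rcases le_or_gt 0 i with h' | h'
        · rw [max_eq_left (by omega), min_eq_left (by omega), abs_of_nonneg h', if_neg (by omega)]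
          omega
        · rw [max_eq_right (by omega), min_eq_left (by omega), abs_of_neg h', if_neg (by omega)]
          omega
  rw [Finset.sum_congr rfl h2]
  rw [Finset.sum_sub_distrib, Finset.sum_add_distrib, sum_ind_pos m hm,
    Finset.sum_ite_eq' (Icc (-m) m) (-m) (fun _ => m), if_pos (by simp; omega),
    sum_linear m hm (2*m)]
  ring

lemma interior_eq (n : ℤ) (hn : 2 ≤ n) : interiorNodes n = hexNodes (n-1) := by
  ext ⟨i,j⟩
  simp [interiorNodes, hexNodes, hexDirs, Finset.mem_Icc, Prod.le_def, abs_le,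
    Prod.mk_add_mk, Prod.mk_sub_mk, forall_eq_or_imp, forall_eq]
  simp only [abs_lt]
  omega

lemma card_hexNodes (n : ℤ) (hn : 1 ≤ n) : ((hexNodes n).card : ℤ) = 3*n^2 - 3*n + 1 := by
  have := card_hexNodes' (n-1) (by omega)
  rw [show n - 1 + 1 = n by ring] at this
  rw [this]; ring

lemma card_hexEdges' (n : ℤ) (hn : 1 ≤ n) : ((hexEdges n).card : ℤ) = 9*n^2 - 15*n + 6 := by
  have hm : (0:ℤ) ≤ n - 1 := by omega
  have e1 := dir_count₁ (n-1) hm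
  have e2 := dir_count₂ (n-1) hm
  have e3 := dir_count₃ (n-1) hm
  rw [show n - 1 + 1 = n by ring] at e1 e2 e3
  have hs : (hexEdges n).card
      = ∑ d ∈ hexDirs, ((hexNodes n).filter (fun p => p + d ∈ hexNodes n)).card := by
    rw [hexEdges, Finset.card_image_of_injOn]
    · rw [Finset.card_filter, Finset.sum_product, Finset.sum_comm]
      exact Finset.sum_congr rfl (fun d _ => (Finset.card_filter _ _).symm)
    · rintro ⟨p, d⟩ hp ⟨p', d'⟩ hp' h
      simp only [Finset.mem_coe, Finset.mem_filter, Finset.mem_product, hexDirs,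
        Finset.mem_insert, Finset.mem_singleton] at hp hp'
      rw [Sym2.eq_iff] at h
      obtain ⟨p1, p2⟩ := p
      obtain ⟨q1, q2⟩ := p'
      rcases hp.1.2 with rfl | rfl | rfl <;> rcases hp'.1.2 with rfl | rfl | rfl <;>
        simp_all [Prod.ext_iff] <;> omega
  rw [hs]
  rw [show hexDirs = {((1:ℤ),(0:ℤ)), ((0:ℤ),(1:ℤ)), ((-1:ℤ),(1:ℤ))} from rfl]
  rw [Finset.sum_insert (by decide), Finset.sum_insert (by decide), Finset.sum_singleton]
  push_cast [e1, e2, e3]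
  ring

-- linear algebra part ------------------------------------------------

lemma edgeEval_apply (n : ℤ) (e : Sym2 (ℤ×ℤ)) (κ) :
    edgeEval n e κ = if h : e ∈ hexEdges n then κ ⟨e, h⟩ else 0 := rfl

lemma eval_single (n : ℤ) (e' : Sym2 (ℤ×ℤ)) {e : Sym2 (ℤ×ℤ)} (he : e ∈ hexEdges n) :
    edgeEval n e' (Pi.single (⟨e, he⟩ : {e : Sym2 (ℤ × ℤ) // e ∈ hexEdges n}) (1:ℝ))
      = if e' = e then 1 else 0 := by
  rw [edgeEval_apply]
  split_ifs with h1 h2 h2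
  · rw [Pi.single_apply, if_pos (Subtype.ext h2)]
  · rw [Pi.single_apply, if_neg (fun hc => h2 (Subtype.ext_iff.mp hc))]
  · exact absurd (h2 ▸ he) h1
  · rfl

lemma interior_mem (n : ℤ) (q : ℤ×ℤ) (hq : q ∈ interiorNodes n) :
    q ∈ hexNodes n ∧ q + (0,1) ∈ hexNodes n := by
  simp only [interiorNodes, Finset.mem_filter] at hq
  exact ⟨hq.1, (hq.2 (0,1) (by simp [hexDirs])).1⟩

lemma edge_mem (n : ℤ) (q : ℤ×ℤ) (h1 : q ∈ hexNodes n) (h2 : q + (0,1) ∈ hexNodes n) :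
    s(q, q+(0,1)) ∈ hexEdges n := by
  rw [hexEdges, Finset.mem_image]
  exact ⟨(q, (0,1)), by simp [Finset.mem_filter, Finset.mem_product, hexDirs, h1, h2], rfl⟩

lemma Z_diag (n : ℤ) (q : ℤ×ℤ) (he : s(q, q+(0,1)) ∈ hexEdges n) :
    Zfun n q (Pi.single (⟨s(q, q+(0,1)), he⟩ : {e : Sym2 (ℤ × ℤ) // e ∈ hexEdges n}) (1:ℝ))
      = 1 := by
  obtain ⟨a, b⟩ := q
  simp only [Zfun, LinearMap.sub_apply, LinearMap.add_apply, eval_single n _ he]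
  have h1 : ¬ (s((a,b), (a,b) + (1,0)) = s((a,b), (a,b) + (0,1))) := by
    simp [Sym2.eq_iff, Prod.ext_iff]
  have h2 : ¬ (s((a,b), (a,b) - (1,0)) = s((a,b), (a,b) + (0,1))) := by
    simp [Sym2.eq_iff, Prod.ext_iff]; try omega
  have h4 : ¬ (s((a,b), (a,b) - (0,1)) = s((a,b), (a,b) + (0,1))) := by
    simp [Sym2.eq_iff, Prod.ext_iff]; try omega
  have h5 : ¬ (s((a,b), (a,b) + (-1,1)) = s((a,b), (a,b) + (0,1))) := by
    simp [Sym2.eq_iff, Prod.ext_iff]; try omega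
  have h6 : ¬ (s((a,b), (a,b) - (-1,1)) = s((a,b), (a,b) + (0,1))) := by
    simp [Sym2.eq_iff, Prod.ext_iff]; try omega
  have h7 : ¬ (s((a,b) + (1,0), (a,b) + (0,1)) = s((a,b), (a,b) + (0,1))) := by
    simp [Sym2.eq_iff, Prod.ext_iff]; try omega
  have h8 : ¬ (s((a,b) + (0,1), (a,b) + (-1,1)) = s((a,b), (a,b) + (0,1))) := by
    simp [Sym2.eq_iff, Prod.ext_iff]; try omega
  have h9 : ¬ (s((a,b) + (-1,1), (a,b) - (1,0)) = s((a,b), (a,b) + (0,1))) := by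
    simp [Sym2.eq_iff, Prod.ext_iff]; try omega
  have h10 : ¬ (s((a,b) - (1,0), (a,b) - (0,1)) = s((a,b), (a,b) + (0,1))) := by
    simp [Sym2.eq_iff, Prod.ext_iff]; try omega
  have h11 : ¬ (s((a,b) - (0,1), (a,b) + (1,-1)) = s((a,b), (a,b) + (0,1))) := by
    simp [Sym2.eq_iff, Prod.ext_iff]; try omega
  have h12 : ¬ (s((a,b) + (1,-1), (a,b) + (1,0)) = s((a,b), (a,b) + (0,1))) := by
    simp [Sym2.eq_iff, Prod.ext_iff]; try omega
  rw [if_neg h1, if_neg h2, if_neg h4, if_neg h5, if_neg h6, if_neg h7, if_neg h8,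
    if_neg h9, if_neg h10, if_neg h11, if_neg h12]
  norm_num

lemma Z_off (n : ℤ) (p q : ℤ×ℤ) (he : s(q, q+(0,1)) ∈ hexEdges n)
    (k0 : p ≠ q) (k1 : p ≠ q + (0,1)) (k2 : p ≠ q + (1,0)) (k3 : p ≠ q + (-1,1)) :
    Zfun n p (Pi.single (⟨s(q, q+(0,1)), he⟩ : {e : Sym2 (ℤ × ℤ) // e ∈ hexEdges n}) (1:ℝ))
      = 0 := by
  obtain ⟨a, b⟩ := p
  obtain ⟨c, d⟩ := q
  simp only [ne_eq, Prod.mk_add_mk, Prod.mk.injEq, not_and] at k0 k1 k2 k3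
  simp only [Zfun, LinearMap.sub_apply, LinearMap.add_apply, eval_single n _ he]
  have h1 : ¬ (s((a,b), (a,b) + (1,0)) = s((c,d), (c,d) + (0,1))) := by
    simp [Sym2.eq_iff, Prod.ext_iff]; try omega
  have h2 : ¬ (s((a,b), (a,b) - (1,0)) = s((c,d), (c,d) + (0,1))) := by
    simp [Sym2.eq_iff, Prod.ext_iff]; try omega
  have h3 : ¬ (s((a,b), (a,b) + (0,1)) = s((c,d), (c,d) + (0,1))) := by
    simp [Sym2.eq_iff, Prod.ext_iff]; try omega
  have h4 : ¬ (s((a,b), (a,b) - (0,1)) = s((c,d), (c,d) + (0,1))) := by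
    simp [Sym2.eq_iff, Prod.ext_iff]; try omega
  have h5 : ¬ (s((a,b), (a,b) + (-1,1)) = s((c,d), (c,d) + (0,1))) := by
    simp [Sym2.eq_iff, Prod.ext_iff]; try omega
  have h6 : ¬ (s((a,b), (a,b) - (-1,1)) = s((c,d), (c,d) + (0,1))) := by
    simp [Sym2.eq_iff, Prod.ext_iff]; try omega
  have h7 : ¬ (s((a,b) + (1,0), (a,b) + (0,1)) = s((c,d), (c,d) + (0,1))) := by
    simp [Sym2.eq_iff, Prod.ext_iff]; try omega
  have h8 : ¬ (s((a,b) + (0,1), (a,b) + (-1,1)) = s((c,d), (c,d) + (0,1))) := by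
    simp [Sym2.eq_iff, Prod.ext_iff]; try omega
  have h9 : ¬ (s((a,b) + (-1,1), (a,b) - (1,0)) = s((c,d), (c,d) + (0,1))) := by
    simp [Sym2.eq_iff, Prod.ext_iff]; try omega
  have h10 : ¬ (s((a,b) - (1,0), (a,b) - (0,1)) = s((c,d), (c,d) + (0,1))) := by
    simp [Sym2.eq_iff, Prod.ext_iff]; try omega
  have h11 : ¬ (s((a,b) - (0,1), (a,b) + (1,-1)) = s((c,d), (c,d) + (0,1))) := by
    simp [Sym2.eq_iff, Prod.ext_iff]; try omega
  have h12 : ¬ (s((a,b) + (1,-1), (a,b) + (1,0)) = s((c,d), (c,d) + (0,1))) := by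
    simp [Sym2.eq_iff, Prod.ext_iff]; try omega
  rw [if_neg h1, if_neg h2, if_neg h3, if_neg h4, if_neg h5, if_neg h6, if_neg h7, if_neg h8,
    if_neg h9, if_neg h10, if_neg h11, if_neg h12]
  norm_num

noncomputable def Lmap (n : ℤ) : ({e : Sym2 (ℤ × ℤ) // e ∈ hexEdges n} → ℝ) →ₗ[ℝ]
    ({p : ℤ×ℤ // p ∈ interiorNodes n} → ℝ) :=
  LinearMap.pi (fun p => Zfun n p.1)

noncomputable def Rmap (n : ℤ) : ({p : ℤ×ℤ // p ∈ interiorNodes n} → ℝ) →ₗ[ℝ]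
    ({e : Sym2 (ℤ × ℤ) // e ∈ hexEdges n} → ℝ) where
  toFun c := ∑ q : {p : ℤ×ℤ // p ∈ interiorNodes n},
    c q • (Pi.single (⟨s(q.1, q.1+(0,1)),
      edge_mem n q.1 (interior_mem n q.1 q.2).1 (interior_mem n q.1 q.2).2⟩ :
        {e : Sym2 (ℤ × ℤ) // e ∈ hexEdges n}) (1:ℝ) :
          {e : Sym2 (ℤ × ℤ) // e ∈ hexEdges n} → ℝ)
  map_add' x y := by simp [add_smul, Finset.sum_add_distrib]
  map_smul' r x := by simp [Finset.smul_sum, smul_smul]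

lemma L_surj (n : ℤ) (hn : 2 ≤ n) : Function.Surjective (Lmap n) := by
  have hT : Function.Injective ((Lmap n).comp (Rmap n)) := by
    rw [← LinearMap.ker_eq_bot, LinearMap.ker_eq_bot']
    intro c hc
    by_contra hne
    have hS : (Finset.univ.filter (fun q => c q ≠ 0)).Nonempty := by
      rcases Function.ne_iff.mp hne with ⟨q, hq⟩
      exact ⟨q, by simpa using hq⟩
    obtain ⟨p, hpS, hmin⟩ :=
      Finset.exists_min_image _ (fun q : {p : ℤ×ℤ // p ∈ interiorNodes n} =>
        4*n*q.1.2 + q.1.1) hS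
    have h0 : ((Lmap n).comp (Rmap n)) c p = 0 := by rw [hc]; rfl
    have hexp : ((Lmap n).comp (Rmap n)) c p
        = ∑ q : {p : ℤ×ℤ // p ∈ interiorNodes n},
            c q * Zfun n p.1 (Pi.single (⟨s(q.1, q.1+(0,1)),
              edge_mem n q.1 (interior_mem n q.1 q.2).1 (interior_mem n q.1 q.2).2⟩ :
                {e : Sym2 (ℤ × ℤ) // e ∈ hexEdges n}) (1:ℝ)) := by
      simp [Lmap, Rmap, LinearMap.pi_apply, map_sum, map_smul, smul_eq_mul]
    rw [Finset.sum_eq_single p] at hexp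
    · rw [Z_diag, mul_one] at hexp
      have : c p ≠ 0 := by simpa using (Finset.mem_filter.mp hpS).2
      rw [h0] at hexp
      exact this hexp.symm
    · intro q _ hqp
      by_cases hcq : c q = 0
      · rw [hcq, zero_mul]
      · have hq : 4*n*p.1.2 + p.1.1 ≤ 4*n*q.1.2 + q.1.1 :=
          hmin q (Finset.mem_filter.mpr ⟨Finset.mem_univ _, hcq⟩)
        have k0 : p.1 ≠ q.1 := fun h => hqp (Subtype.ext h).symm
        have k1 : p.1 ≠ q.1 + (0,1) := by
          intro h
          rw [h] at hq
          simp only [Prod.fst_add, Prod.snd_add] at hq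
          nlinarith
        have k2 : p.1 ≠ q.1 + (1,0) := by
          intro h
          rw [h] at hq
          simp only [Prod.fst_add, Prod.snd_add] at hq
          nlinarith
        have k3 : p.1 ≠ q.1 + (-1,1) := by
          intro h
          rw [h] at hq
          simp only [Prod.fst_add, Prod.snd_add] at hq
          nlinarith
        rw [Z_off n p.1 q.1 _ k0 k1 k2 k3, mul_zero]
    · intro h
      exact absurd (Finset.mem_univ p) h
  have hTs : Function.Surjective ((Lmap n).comp (Rmap n)) :=
    LinearMap.injective_iff_surjective.mp hT
  rw [LinearMap.coe_comp] at hTs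
  exact Function.Surjective.of_comp hTs


/-- for `n ≥ 2`, the set of all `κ ∈ ℝ^E` satisfying the hexagonal equation at
every interior node (i.e. `Z_p κ = 0` for all interior `p`) is a linear subspace of `ℝ^E` of
dimension `E(n) - M(n) = (9n² - 15n + 6) - (3n² - 9n + 7) = 6n² - 6n - 1 = 2N(n) - 3`. -/
theorem hexagonal_solution_space_dim (n : ℤ) (hn : 2 ≤ n) :
    ∃ V : Submodule ℝ ({e : Sym2 (ℤ × ℤ) // e ∈ hexEdges n} → ℝ),
      (∀ κ, κ ∈ V ↔ ∀ p ∈ interiorNodes n, Zfun n p κ = 0) ∧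
      (Module.finrank ℝ V : ℤ) = ((hexEdges n).card : ℤ) - ((interiorNodes n).card : ℤ) ∧
      (Module.finrank ℝ V : ℤ) = (9 * n ^ 2 - 15 * n + 6) - (3 * n ^ 2 - 9 * n + 7) ∧
      (Module.finrank ℝ V : ℤ) = 6 * n ^ 2 - 6 * n - 1 ∧
      (Module.finrank ℝ V : ℤ) = 2 * ((hexNodes n).card : ℤ) - 3 := by
  have hR : LinearMap.range (Lmap n) = ⊤ := LinearMap.range_eq_top.mpr (L_surj n hn)
  have hrn := LinearMap.finrank_range_add_finrank_ker (Lmap n)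
  rw [hR, finrank_top] at hrn
  simp only [Module.finrank_fintype_fun_eq_card, Fintype.card_coe] at hrn
  have hzn : ((interiorNodes n).card : ℤ) + (Module.finrank ℝ (LinearMap.ker (Lmap n)) : ℤ)
      = ((hexEdges n).card : ℤ) := by exact_mod_cast hrn
  have hE := card_hexEdges' n (by omega)
  have hM : ((interiorNodes n).card : ℤ) = 3*n^2 - 9*n + 7 := by
    rw [interior_eq n hn, card_hexNodes (n-1) (by omega)]; ring
  have hN := card_hexNodes n (by omega)
  refine ⟨LinearMap.ker (Lmap n), ?_, by linarith, by linarith, by linarith, by linarith⟩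
  intro κ
  rw [LinearMap.mem_ker]
  constructor
  · intro h p hp
    have := congrFun h (⟨p, hp⟩ : {p : ℤ×ℤ // p ∈ interiorNodes n})
    simpa [Lmap, LinearMap.pi_apply] using this
  · intro h
    funext q
    simpa [Lmap, LinearMap.pi_apply] using h q.1 q.2
end

section
/- Fix s > 0 and an integer n ≥ 2. For every i₀ ∈ ℤ, the stripe elongation vector κ defined by κ(e) = s if e is an edge of the form {(i₀, j), (i₀+1, j)} (an edge parallel to direction 1) with both endpoints in H_n, and κ(e) = 0 for all other edges, is a still state of the hexagonal array of side n: it takes values in {0, s} and satisfies the hexagonal equation at every interior node. -/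
open scoped Classical

/-- The hexagonal equation for `κ` at a node `p`: the sum of `κ` over the six spoke edges of
`p` equals the sum of `κ` over the six rim edges around `p`. -/
def hexEq (κ : Sym2 (ℤ × ℤ) → ℝ) (p : ℤ × ℤ) : Prop :=
  κ s(p, p + (1,0)) + κ s(p, p - (1,0)) + κ s(p, p + (0,1)) + κ s(p, p - (0,1)) +
    κ s(p, p + (-1,1)) + κ s(p, p - (-1,1)) =
  κ s(p + (1,0), p + (0,1)) + κ s(p + (0,1), p + (-1,1)) + κ s(p + (-1,1), p - (1,0)) +
    κ s(p - (1,0), p - (0,1)) + κ s(p - (0,1), p + (1,-1)) + κ s(p + (1,-1), p + (1,0))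

/-- A still state with critical elongation `σ`: every edge elongation is `0` or `σ` and the
hexagonal equation holds at every interior node. -/
def StillState (n : ℤ) (σ : ℝ) (κ : Sym2 (ℤ × ℤ) → ℝ) : Prop :=
  (∀ e ∈ hexEdges n, κ e = 0 ∨ κ e = σ) ∧ ∀ p ∈ interiorNodes n, hexEq κ p

lemma cond_char (n i₀ x1 x2 y1 y2 : ℤ) :
    (∃ j : ℤ, s(((x1, x2) : ℤ × ℤ), ((y1, y2) : ℤ × ℤ)) =
        s(((i₀, j) : ℤ × ℤ), ((i₀ + 1, j) : ℤ × ℤ)) ∧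
        ((i₀, j) : ℤ × ℤ) ∈ hexNodes n ∧ ((i₀ + 1, j) : ℤ × ℤ) ∈ hexNodes n)
    ↔ (x2 = y2 ∧ (x1 = i₀ ∧ y1 = i₀ + 1 ∨ y1 = i₀ ∧ x1 = i₀ + 1) ∧
        (x1, x2) ∈ hexNodes n ∧ (y1, y2) ∈ hexNodes n) := by
  simp only [Sym2.eq_iff, Prod.mk.injEq]
  constructor
  · rintro ⟨j, ⟨⟨h1, h2⟩, h3, h4⟩ | ⟨⟨h1, h2⟩, h3, h4⟩, m1, m2⟩ <;> subst h1 <;> subst h2 <;>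
      subst h3 <;> subst h4 <;> simp_all
  · rintro ⟨rfl, h1 | h1, mx, my⟩
    · refine ⟨x2, Or.inl ⟨⟨h1.1, rfl⟩, h1.2, rfl⟩, ?_, ?_⟩
      · rwa [← h1.1]
      · rwa [← h1.2]
    · refine ⟨x2, Or.inr ⟨⟨h1.2, rfl⟩, h1.1, rfl⟩, ?_, ?_⟩
      · rwa [← h1.1]
      · rwa [← h1.2]

/-- the stripe elongation vector — equal to `σ` on the direction-1 edges
`{(i₀, j), (i₀+1, j)}` (for all `j`) with both endpoints in the array, and `0` on all other
edges — is a still state of the hexagonal array of side `n ≥ 2`. -/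
theorem stripe_is_still_state (σ : ℝ) (hσ : 0 < σ) (n : ℤ) (hn : 2 ≤ n) (i₀ : ℤ) :
    StillState n σ (fun e =>
      if ∃ j : ℤ, e = s(((i₀, j) : ℤ × ℤ), ((i₀ + 1, j) : ℤ × ℤ)) ∧
          ((i₀, j) : ℤ × ℤ) ∈ hexNodes n ∧ ((i₀ + 1, j) : ℤ × ℤ) ∈ hexNodes n
      then σ else 0) := by
  constructor
  · intro e _
    dsimp only
    split_ifs
    · exact Or.inr rfl
    · exact Or.inl rfl
  · rintro ⟨a, b⟩ hp
    simp only [interiorNodes, Finset.mem_filter] at hp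
    obtain ⟨hp0, hnb⟩ := hp
    obtain ⟨m1, m2⟩ := hnb (1, 0) (by simp [hexDirs])
    obtain ⟨m3, m4⟩ := hnb (0, 1) (by simp [hexDirs])
    obtain ⟨m5, m6⟩ := hnb (-1, 1) (by simp [hexDirs])
    simp only [Prod.mk_add_mk, Prod.mk_sub_mk, add_zero, sub_zero, ← sub_eq_add_neg,
      sub_neg_eq_add] at m1 m2 m3 m4 m5 m6
    simp only [hexEq, Prod.mk_add_mk, Prod.mk_sub_mk, add_zero, sub_zero, ← sub_eq_add_neg,
      sub_neg_eq_add]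
    simp only [cond_char, hp0, m1, m2, m3, m4, m5, m6, and_true, true_and]
    simp only [show ¬(b = b + 1) from by omega, show ¬(b = b - 1) from by omega,
      show ¬(b + 1 = b) from by omega, show ¬(b - 1 = b) from by omega,
      false_and, if_false]
    ring
end
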